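/- Let a : ℕ → ℝ be a nondecreasing concave sequence. Then for each p ∈ ℕ and every n ∈ ℕ, one has (1/(p+1))·C(n+p, p)·a(n) + (p/(p+1))·C(n+p, p)·a(0) ≤ (Σ^p a)(n) ≤ C(n+p, p)·a(n), where C(n+p, p) denotes the binomial coefficient (n+p choose p). -/

import Mathlib

private lemma chord (a : ℕ → ℝ) (hconc : Antitone fun n => a (n + 1) - a n)
    {k n : ℕ} (hk : k ≤ n) :
    ((n - k : ℕ) : ℝ) * a 0 + (k : ℝ) * a n ≤ (n : ℝ) * a k := by
  have h1 : a k - a 0 = ∑ j ∈ Finset.range k, (a (j + 1) - a j) :=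
    (Finset.sum_range_sub a k).symm
  have h2 : a n - a k = ∑ j ∈ Finset.Ico k n, (a (j + 1) - a j) := by
    rw [Finset.sum_Ico_eq_sub _ hk, Finset.sum_range_sub, Finset.sum_range_sub]; ring
  have hb1 : (k : ℝ) * (a (k + 1) - a k) ≤ a k - a 0 := by
    rw [h1]
    calc (k : ℝ) * (a (k + 1) - a k)
        = ∑ _j ∈ Finset.range k, (a (k + 1) - a k) := by
          simp [Finset.sum_const, mul_comm]; ring
      _ ≤ ∑ j ∈ Finset.range k, (a (j + 1) - a j) := by
          apply Finset.sum_le_sum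
          intro j hj
          exact hconc (le_of_lt (Finset.mem_range.mp hj))
  have hb2 : a n - a k ≤ ((n - k : ℕ) : ℝ) * (a (k + 1) - a k) := by
    rw [h2]
    calc ∑ j ∈ Finset.Ico k n, (a (j + 1) - a j)
        ≤ ∑ _j ∈ Finset.Ico k n, (a (k + 1) - a k) := by
          apply Finset.sum_le_sum
          intro j hj
          exact hconc (Finset.mem_Ico.mp hj).1
      _ = ((n - k : ℕ) : ℝ) * (a (k + 1) - a k) := by
          simp [Finset.sum_const, Nat.card_Ico]; ring
  have hcast : ((n - k : ℕ) : ℝ) = (n : ℝ) - (k : ℝ) := by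
    push_cast [hk]; ring
  have hknn : (0 : ℝ) ≤ (k : ℝ) := Nat.cast_nonneg _
  rw [hcast] at hb2 ⊢
  nlinarith [mul_le_mul_of_nonneg_left hb1 (by linarith [(Nat.cast_le (α := ℝ)).mpr hk] :
      (0:ℝ) ≤ (n : ℝ) - (k : ℝ)), mul_le_mul_of_nonneg_left hb2 hknn]

private lemma sum_choose_nat (p n : ℕ) :
    ∑ k ∈ Finset.range (n + 1), (k + p).choose p = (n + p + 1).choose (p + 1) := by
  induction n with
  | zero => simp
  | succ n ih =>
    rw [Finset.sum_range_succ, ih]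
    have h := Nat.choose_succ_succ (n + p + 1) p
    simp only [Nat.succ_eq_add_one] at h
    have e : n + 1 + p = n + p + 1 := by ring
    rw [e]
    omega

private lemma sum_choose_real (p n : ℕ) :
    ∑ k ∈ Finset.range (n + 1), ((k + p).choose p : ℝ) = ((n + p + 1).choose (p + 1) : ℝ) := by
  exact_mod_cast congrArg (Nat.cast : ℕ → ℝ) (sum_choose_nat p n)

private lemma Tid (p n : ℕ) :
    ((p : ℝ) + 2) * ∑ k ∈ Finset.range (n + 1), (k : ℝ) * ((k + p).choose p : ℝ)
      = ((p : ℝ) + 1) * (n : ℝ) * ((n + p + 1).choose (p + 1) : ℝ) := by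
  induction n with
  | zero => simp
  | succ n ih =>
    rw [Finset.sum_range_succ, mul_add, ih]
    have h1 : ((n + p + 1).choose (p + 1) : ℝ) * ((p : ℝ) + 1)
        = ((n + p + 1).choose p : ℝ) * ((n : ℝ) + 1) := by
      have := Nat.choose_succ_right_eq (n + p + 1) p
      have e : n + p + 1 - p = n + 1 := by omega
      rw [e] at this
      exact_mod_cast congrArg (Nat.cast : ℕ → ℝ) this
    have h2 : ((n + p + 1 + 1).choose (p + 1) : ℝ)
        = ((n + p + 1).choose p : ℝ) + ((n + p + 1).choose (p + 1) : ℝ) := by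
      have h := Nat.choose_succ_succ (n + p + 1) p
      simp only [Nat.succ_eq_add_one] at h
      exact_mod_cast congrArg (Nat.cast : ℕ → ℝ) h
    have e4 : n + 1 + p = n + p + 1 := by omega
    rw [e4]
    push_cast
    linear_combination -(((p : ℝ) + 1) * ((n : ℝ) + 1)) * h2 - h1

/-- The summation operator on real sequences: `(Σa)(n) = ∑_{k=0}^{n} a(k)`. -/
def sigSeq (a : ℕ → ℝ) : ℕ → ℝ := fun n => ∑ k ∈ Finset.range (n + 1), a k

private lemma key (a : ℕ → ℝ) (hconc : Antitone fun n => a (n + 1) - a n) (p n : ℕ) :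
    ((n + p + 1).choose (p + 1) : ℝ) * (((p : ℝ) + 1) * a n + a 0)
      ≤ ((p : ℝ) + 2) * ∑ k ∈ Finset.range (n + 1), ((k + p).choose p : ℝ) * a k := by
  rcases Nat.eq_zero_or_pos n with rfl | hn
  · simp [Nat.choose_self]
    ring_nf
    exact le_rfl
  · have hnpos : (0 : ℝ) < (n : ℝ) := by exact_mod_cast hn
    have point : ∀ k ∈ Finset.range (n + 1),
        (a 0 * (n : ℝ)) * ((k + p).choose p : ℝ)
          - a 0 * ((k : ℝ) * ((k + p).choose p : ℝ))
          + a n * ((k : ℝ) * ((k + p).choose p : ℝ))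
          ≤ (n : ℝ) * (((k + p).choose p : ℝ) * a k) := by
      intro k hk
      have hk' : k ≤ n := Nat.lt_succ_iff.mp (Finset.mem_range.mp hk)
      have hch := chord a hconc hk'
      have hcast : ((n - k : ℕ) : ℝ) = (n : ℝ) - (k : ℝ) := by push_cast [hk']; ring
      rw [hcast] at hch
      have hw : (0 : ℝ) ≤ ((k + p).choose p : ℝ) := Nat.cast_nonneg _
      nlinarith [mul_le_mul_of_nonneg_left hch hw]
    have hsum := Finset.sum_le_sum point
    simp only [Finset.sum_add_distrib, Finset.sum_sub_distrib, ← Finset.mul_sum] at hsum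
    rw [sum_choose_real] at hsum
    have B := Tid p n
    have heq : (n : ℝ) * (((n + p + 1).choose (p + 1) : ℝ) * (((p : ℝ) + 1) * a n + a 0))
        = ((p : ℝ) + 2) *
            ((a 0 * (n : ℝ)) * ((n + p + 1).choose (p + 1) : ℝ)
              - a 0 * ∑ k ∈ Finset.range (n + 1), (k : ℝ) * ((k + p).choose p : ℝ)
              + a n * ∑ k ∈ Finset.range (n + 1), (k : ℝ) * ((k + p).choose p : ℝ)) := by
      linear_combination (a 0 - a n) * B
    refine le_of_mul_le_mul_left ?_ hnpos
    calc (n : ℝ) * (((n + p + 1).choose (p + 1) : ℝ) * (((p : ℝ) + 1) * a n + a 0))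
        = ((p : ℝ) + 2) * _ := heq
      _ ≤ ((p : ℝ) + 2) * ((n : ℝ) * ∑ k ∈ Finset.range (n + 1), ((k + p).choose p : ℝ) * a k) := by
          apply mul_le_mul_of_nonneg_left hsum (by positivity)
      _ = (n : ℝ) * (((p : ℝ) + 2) * ∑ k ∈ Finset.range (n + 1), ((k + p).choose p : ℝ) * a k) := by
          ring

/-- Theorem 4.3: if `a` is a nondecreasing concave sequence, then for each `p, n ∈ ℕ`,
`(1/(p+1))·C(n+p,p)·a(n) + (p/(p+1))·C(n+p,p)·a(0) ≤ (Σ^p a)(n) ≤ C(n+p,p)·a(n)`. -/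
theorem stmt9 (a : ℕ → ℝ) (hmono : Monotone a)
    (hconc : Antitone fun n => a (n + 1) - a n) :
    ∀ p n : ℕ,
      (1 / ((p : ℝ) + 1)) * (Nat.choose (n + p) p : ℝ) * a n +
          ((p : ℝ) / ((p : ℝ) + 1)) * (Nat.choose (n + p) p : ℝ) * a 0 ≤ sigSeq^[p] a n ∧
      sigSeq^[p] a n ≤ (Nat.choose (n + p) p : ℝ) * a n := by
  have haux : ∀ p n : ℕ,
      ((n + p).choose p : ℝ) * a n + (p : ℝ) * (((n + p).choose p : ℝ) * a 0)
        ≤ ((p : ℝ) + 1) * sigSeq^[p] a n ∧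
      sigSeq^[p] a n ≤ ((n + p).choose p : ℝ) * a n := by
    intro p
    induction p with
    | zero =>
      intro n
      simp
    | succ p ih =>
      intro n
      have eidx : n + (p + 1) = n + p + 1 := by omega
      rw [eidx]
      have hiter : sigSeq^[p + 1] a n = ∑ k ∈ Finset.range (n + 1), sigSeq^[p] a k := by
        rw [Function.iterate_succ_apply']
        rfl
      have hupper : sigSeq^[p + 1] a n ≤ ((n + p + 1).choose (p + 1) : ℝ) * a n := by
        rw [hiter]
        calc ∑ k ∈ Finset.range (n + 1), sigSeq^[p] a k
            ≤ ∑ k ∈ Finset.range (n + 1), ((k + p).choose p : ℝ) * a k :=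
              Finset.sum_le_sum (fun k _ => (ih k).2)
          _ ≤ ∑ k ∈ Finset.range (n + 1), ((k + p).choose p : ℝ) * a n := by
              apply Finset.sum_le_sum
              intro k hk
              exact mul_le_mul_of_nonneg_left
                (hmono (Nat.lt_succ_iff.mp (Finset.mem_range.mp hk))) (Nat.cast_nonneg _)
          _ = (∑ k ∈ Finset.range (n + 1), ((k + p).choose p : ℝ)) * a n := by
              rw [Finset.sum_mul]
          _ = ((n + p + 1).choose (p + 1) : ℝ) * a n := by rw [sum_choose_real]
      have hIHsum := Finset.sum_le_sum (fun k (_ : k ∈ Finset.range (n + 1)) => (ih k).1)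
      rw [Finset.sum_add_distrib, ← Finset.mul_sum, ← Finset.mul_sum, ← Finset.sum_mul,
        sum_choose_real, ← hiter] at hIHsum
      -- hIHsum : Q + p * (C * a 0) ≤ (p+1) * Σ'
      have K := key a hconc p n
      have hlow : ((n + p + 1).choose (p + 1) : ℝ) * a n
            + ((p : ℝ) + 1) * (((n + p + 1).choose (p + 1) : ℝ) * a 0)
          ≤ ((p : ℝ) + 2) * sigSeq^[p + 1] a n := by
        have hm : ((p : ℝ) + 1) * (((n + p + 1).choose (p + 1) : ℝ) * a n
              + ((p : ℝ) + 1) * (((n + p + 1).choose (p + 1) : ℝ) * a 0))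
            ≤ ((p : ℝ) + 1) * (((p : ℝ) + 2) * sigSeq^[p + 1] a n) := by
          nlinarith [K, mul_le_mul_of_nonneg_left hIHsum (show (0:ℝ) ≤ (p:ℝ) + 2 by positivity)]
        exact le_of_mul_le_mul_left hm (by positivity)
      constructor
      · push_cast
        linarith [hlow]
      · exact hupper
  intro p n
  obtain ⟨h1, h2⟩ := haux p n
  refine ⟨?_, h2⟩
  have hp1 : (0 : ℝ) < (p : ℝ) + 1 := by positivity
  rw [show (1 / ((p : ℝ) + 1)) * (Nat.choose (n + p) p : ℝ) * a n +
        ((p : ℝ) / ((p : ℝ) + 1)) * (Nat.choose (n + p) p : ℝ) * a 0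
      = (((n + p).choose p : ℝ) * a n + (p : ℝ) * (((n + p).choose p : ℝ) * a 0)) / ((p : ℝ) + 1)
      from by ring, div_le_iff₀ hp1]
  linarith [h1]
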